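/- Let m = 2n+1 and let A : V_0 → V_1 be a regular odd nilpotent, i.e. of Jordan/ab-diagram type α_n given by a single chain a_1 → b_1 → a_2 → ... → b_{2n} → a_{2n+1} → 0 (so A and A* act by shifting along the chain). Then there exists a unique pair (F_0, F_1) of complete self-orthogonal flags such that A F_0^(i) ⊆ F_1^(i-1) for all i: necessarily F_0^(1) = span(a_{2n+1}), F_1^(1) = span(b_{2n}), and inductively each flag step is determined. -/

import Mathlib

open Submodule Module

private def stmt11Equiv (N i : ℕ) (h : i ≤ N) :
    {j : Fin N // N ≤ i + (j : ℕ)} ≃ Fin i where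
  toFun j := ⟨(j.1 : ℕ) - (N - i), by have h1 := j.1.isLt; have h2 := j.2; omega⟩
  invFun k := ⟨⟨N - i + (k : ℕ), by have := k.isLt; omega⟩, by
    show N ≤ i + (N - i + (k : ℕ)); omega⟩
  left_inv j := by
    apply Subtype.ext; apply Fin.ext
    have h1 := j.1.isLt; have h2 := j.2
    show N - i + ((j.1 : ℕ) - (N - i)) = (j.1 : ℕ)
    omega
  right_inv k := by
    apply Fin.ext
    have := k.isLt
    show (N - i + (k : ℕ)) - (N - i) = (k : ℕ)
    omega

private lemma stmt11_finrank_span {K V ι : Type*} [Field K] [AddCommGroup V] [Module K V]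
    (bs : Basis ι K V) (s : Set ι) [Fintype s] :
    finrank K (span K (bs '' s)) = Fintype.card s := by
  have h : bs '' s = Set.range (fun j : s => bs j) := by
    ext x; simp [Set.mem_image]
  rw [h]
  exact finrank_span_eq_card (bs.linearIndependent.comp _ Subtype.val_injective)

/- STATEMENT 11: `m = 2n+1`; let `A : V₀ → V₁` be a regular odd nilpotent of ab-diagram
type `α_n`: a single chain `a_1 → b_1 → a_2 → ... → b_{2n} → a_{2n+1} → 0`, where
`A a_i = b_i`, `A* b_i = a_{i+1}`, `A a_{2n+1} = 0`, with dual vectors paired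
antidiagonally (`B₀(a_i, a_j) ≠ 0` iff `i + j = 2n+2`, `B₁(b_i, b_j) ≠ 0` iff
`i + j = 2n+1`; 1-indexed).  Then there exists a unique pair `(F₀, F₁)` of complete
self-orthogonal flags with `A F₀^{(i)} ⊆ F₁^{(i-1)}` for all `i` (together with the
equivalent adjoint conditions `A* F₁^{(j)} ⊆ F₀^{(j)}`); necessarily
`F₀^{(1)} = span(a_{2n+1})` and `F₁^{(1)} = span(b_{2n})`. -/
theorem stmt11 (n : ℕ) (hn : 0 < n) {V₀ V₁ : Type*}
    [AddCommGroup V₀] [Module ℂ V₀] [FiniteDimensional ℂ V₀]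
    [AddCommGroup V₁] [Module ℂ V₁] [FiniteDimensional ℂ V₁]
    (B₀ : LinearMap.BilinForm ℂ V₀) (B₁ : LinearMap.BilinForm ℂ V₁)
    (hB₀symm : B₀.IsSymm) (hB₀nd : B₀.Nondegenerate)
    (hB₁alt : B₁.IsAlt) (hB₁nd : B₁.Nondegenerate)
    (A : V₀ →ₗ[ℂ] V₁) (Astar : V₁ →ₗ[ℂ] V₀)
    (hadj : ∀ (v : V₀) (w : V₁), B₁ (A v) w = B₀ v (Astar w))
    (a : Basis (Fin (2 * n + 1)) ℂ V₀) (b : Basis (Fin (2 * n)) ℂ V₁)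
    (hchainA : ∀ i : Fin (2 * n), A (a i.castSucc) = b i)
    (hchainA' : A (a (Fin.last (2 * n))) = 0)
    (hchainAstar : ∀ i : Fin (2 * n), Astar (b i) = a i.succ)
    (hpair₀ : ∀ i j : Fin (2 * n + 1), B₀ (a i) (a j) = 0 ↔ (i : ℕ) + (j : ℕ) ≠ 2 * n)
    (hpair₁ : ∀ i j : Fin (2 * n), B₁ (b i) (b j) = 0 ↔ (i : ℕ) + (j : ℕ) ≠ 2 * n - 1) :
    let P : ((ℕ → Submodule ℂ V₀) × (ℕ → Submodule ℂ V₁)) → Prop := fun FP =>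
      Monotone FP.1 ∧ Monotone FP.2 ∧
      (∀ i ≤ 2 * n + 1, Module.finrank ℂ (FP.1 i) = i) ∧
      (∀ i ≤ 2 * n, Module.finrank ℂ (FP.2 i) = i) ∧
      (∀ i, 2 * n + 1 ≤ i → FP.1 i = ⊤) ∧ (∀ i, 2 * n ≤ i → FP.2 i = ⊤) ∧
      (∀ i ≤ 2 * n + 1, ∀ v ∈ FP.1 i, ∀ w ∈ FP.1 (2 * n + 1 - i), B₀ v w = 0) ∧
      (∀ i ≤ 2 * n, ∀ v ∈ FP.2 i, ∀ w ∈ FP.2 (2 * n - i), B₁ v w = 0) ∧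
      (∀ i, 1 ≤ i → i ≤ 2 * n + 1 → (FP.1 i).map A ≤ FP.2 (i - 1)) ∧
      (∀ j, (FP.2 j).map Astar ≤ FP.1 j)
    (∃! FP, P FP) ∧
      ∀ FP, P FP →
        FP.1 1 = (ℂ ∙ a (Fin.last (2 * n))) ∧
        FP.2 1 = (ℂ ∙ b ⟨2 * n - 1, by omega⟩) := by
  intro P
  classical
  set S0 : ℕ → Submodule ℂ V₀ :=
    fun i => span ℂ (a '' {j : Fin (2 * n + 1) | 2 * n + 1 ≤ i + (j : ℕ)}) with hS0def
  set S1 : ℕ → Submodule ℂ V₁ :=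
    fun i => span ℂ (b '' {j : Fin (2 * n) | 2 * n ≤ i + (j : ℕ)}) with hS1def
  have hS0 : ∀ i, S0 i = span ℂ (a '' {j : Fin (2 * n + 1) | 2 * n + 1 ≤ i + (j : ℕ)}) :=
    fun i => by rw [hS0def]
  have hS1 : ∀ i, S1 i = span ℂ (b '' {j : Fin (2 * n) | 2 * n ≤ i + (j : ℕ)}) :=
    fun i => by rw [hS1def]
  -- monotonicity
  have hmono0 : Monotone S0 := fun i i' h => by
    rw [hS0, hS0]
    exact span_mono (Set.image_mono fun j hj => by
      simp only [Set.mem_setOf_eq] at hj ⊢; omega)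
  have hmono1 : Monotone S1 := fun i i' h => by
    rw [hS1, hS1]
    exact span_mono (Set.image_mono fun j hj => by
      simp only [Set.mem_setOf_eq] at hj ⊢; omega)
  -- ranks
  have hrank0 : ∀ i, i ≤ 2 * n + 1 → finrank ℂ (S0 i) = i := by
    intro i hi
    rw [hS0, stmt11_finrank_span]
    exact (Fintype.card_congr (stmt11Equiv (2 * n + 1) i hi)).trans (Fintype.card_fin i)
  have hrank1 : ∀ i, i ≤ 2 * n → finrank ℂ (S1 i) = i := by
    intro i hi
    rw [hS1, stmt11_finrank_span]
    exact (Fintype.card_congr (stmt11Equiv (2 * n) i hi)).trans (Fintype.card_fin i)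
  -- tops
  have htop0 : ∀ i, 2 * n + 1 ≤ i → S0 i = ⊤ := by
    intro i hi
    rw [hS0]
    have he : {j : Fin (2 * n + 1) | 2 * n + 1 ≤ i + (j : ℕ)} = Set.univ :=
      Set.eq_univ_of_forall fun j => by simp only [Set.mem_setOf_eq]; omega
    rw [he, Set.image_univ, Basis.span_eq]
  have htop1 : ∀ i, 2 * n ≤ i → S1 i = ⊤ := by
    intro i hi
    rw [hS1]
    have he : {j : Fin (2 * n) | 2 * n ≤ i + (j : ℕ)} = Set.univ :=
      Set.eq_univ_of_forall fun j => by simp only [Set.mem_setOf_eq]; omega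
    rw [he, Set.image_univ, Basis.span_eq]
  -- orthogonality
  have horth0 : ∀ i, i ≤ 2 * n + 1 → ∀ v ∈ S0 i, ∀ w ∈ S0 (2 * n + 1 - i), B₀ v w = 0 := by
    intro i hi v hv w hw
    rw [hS0] at hv hw
    have key : ∀ x ∈ a '' {j : Fin (2 * n + 1) | 2 * n + 1 ≤ i + (j : ℕ)},
        ∀ y ∈ a '' {j : Fin (2 * n + 1) | 2 * n + 1 ≤ 2 * n + 1 - i + (j : ℕ)}, B₀ x y = 0 := by
      rintro x ⟨j, hj, rfl⟩ y ⟨k, hk, rfl⟩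
      rw [hpair₀]
      simp only [Set.mem_setOf_eq] at hj hk
      omega
    have h1 : ∀ x ∈ a '' {j : Fin (2 * n + 1) | 2 * n + 1 ≤ i + (j : ℕ)},
        span ℂ (a '' {j : Fin (2 * n + 1) | 2 * n + 1 ≤ 2 * n + 1 - i + (j : ℕ)}) ≤
          LinearMap.ker (B₀ x) :=
      fun x hx => span_le.2 fun y hy => LinearMap.mem_ker.2 (key x hx y hy)
    have h2 : span ℂ (a '' {j : Fin (2 * n + 1) | 2 * n + 1 ≤ i + (j : ℕ)}) ≤
        LinearMap.ker (B₀.flip w) :=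
      span_le.2 fun x hx => by
        simp only [SetLike.mem_coe, LinearMap.mem_ker, LinearMap.flip_apply]
        exact LinearMap.mem_ker.1 (h1 x hx hw)
    exact LinearMap.mem_ker.1 (h2 hv)
  have horth1 : ∀ i, i ≤ 2 * n → ∀ v ∈ S1 i, ∀ w ∈ S1 (2 * n - i), B₁ v w = 0 := by
    intro i hi v hv w hw
    rw [hS1] at hv hw
    have key : ∀ x ∈ b '' {j : Fin (2 * n) | 2 * n ≤ i + (j : ℕ)},
        ∀ y ∈ b '' {j : Fin (2 * n) | 2 * n ≤ 2 * n - i + (j : ℕ)}, B₁ x y = 0 := by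
      rintro x ⟨j, hj, rfl⟩ y ⟨k, hk, rfl⟩
      rw [hpair₁]
      simp only [Set.mem_setOf_eq] at hj hk
      omega
    have h1 : ∀ x ∈ b '' {j : Fin (2 * n) | 2 * n ≤ i + (j : ℕ)},
        span ℂ (b '' {j : Fin (2 * n) | 2 * n ≤ 2 * n - i + (j : ℕ)}) ≤
          LinearMap.ker (B₁ x) :=
      fun x hx => span_le.2 fun y hy => LinearMap.mem_ker.2 (key x hx y hy)
    have h2 : span ℂ (b '' {j : Fin (2 * n) | 2 * n ≤ i + (j : ℕ)}) ≤
        LinearMap.ker (B₁.flip w) :=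
      span_le.2 fun x hx => by
        simp only [SetLike.mem_coe, LinearMap.mem_ker, LinearMap.flip_apply]
        exact LinearMap.mem_ker.1 (h1 x hx hw)
    exact LinearMap.mem_ker.1 (h2 hv)
  -- map conditions
  have hmapA : ∀ i, 1 ≤ i → (S0 i).map A ≤ S1 (i - 1) := by
    intro i hi
    rw [hS0, hS1, Submodule.map_span]
    refine span_le.2 ?_
    rintro x ⟨y, ⟨j, hj, rfl⟩, rfl⟩
    simp only [Set.mem_setOf_eq] at hj
    rcases Fin.eq_castSucc_or_eq_last j with ⟨j', rfl⟩ | rfl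
    · rw [hchainA]
      refine subset_span ⟨j', ?_, rfl⟩
      simp only [Set.mem_setOf_eq]
      simp only [Fin.coe_castSucc] at hj
      omega
    · rw [hchainA']
      exact zero_mem _
  have hmapAstar : ∀ i, (S1 i).map Astar ≤ S0 i := by
    intro i
    rw [hS0, hS1, Submodule.map_span]
    refine span_le.2 ?_
    rintro x ⟨y, ⟨k, hk, rfl⟩, rfl⟩
    simp only [Set.mem_setOf_eq] at hk
    rw [hchainAstar]
    refine subset_span ⟨k.succ, ?_, rfl⟩
    simp only [Set.mem_setOf_eq, Fin.val_succ]
    omega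
  -- existence
  have hP : P (S0, S1) :=
    ⟨hmono0, hmono1, fun i hi => hrank0 i hi, fun i hi => hrank1 i hi,
      htop0, htop1, fun i hi => horth0 i hi, fun i hi => horth1 i hi,
      fun i h1 _ => hmapA i h1, hmapAstar⟩
  -- coordinate computations
  have hreprA : ∀ (v : V₀) (j' : Fin (2 * n)), b.repr (A v) j' = a.repr v j'.castSucc := by
    intro v j'
    have hv : A v = ∑ k : Fin (2 * n), a.repr v k.castSucc • b k := by
      conv_lhs => rw [← a.sum_repr v]
      rw [map_sum]
      simp only [map_smul]
      rw [Fin.sum_univ_castSucc]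
      simp [hchainA, hchainA']
    rw [hv, map_sum]
    simp only [map_smul, Basis.repr_self]
    rw [Finsupp.finset_sum_apply]
    simp [Finsupp.single_apply]
  have hreprAstar : ∀ (w : V₁) (k : Fin (2 * n)), a.repr (Astar w) k.succ = b.repr w k := by
    intro w k
    have hw : Astar w = ∑ l : Fin (2 * n), b.repr w l • a l.succ := by
      conv_lhs => rw [← b.sum_repr w]
      rw [map_sum]
      simp [hchainAstar]
    rw [hw, map_sum]
    simp only [map_smul, Basis.repr_self]
    rw [Finsupp.finset_sum_apply]
    simp [Finsupp.single_apply, Fin.succ_inj]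
  -- preimage inclusions
  have hcomapA : ∀ i (v : V₀), A v ∈ S1 i → v ∈ S0 (i + 1) := by
    intro i v hv
    rw [hS1] at hv
    rw [hS0, Basis.mem_span_image a]
    intro j hj
    rw [Finset.mem_coe, Finsupp.mem_support_iff] at hj
    simp only [Set.mem_setOf_eq]
    rcases Fin.eq_castSucc_or_eq_last j with ⟨j', rfl⟩ | rfl
    · have hne : b.repr (A v) j' ≠ 0 := by rw [hreprA]; exact hj
      have h2 := (Basis.mem_span_image b).1 hv (Finset.mem_coe.2 (Finsupp.mem_support_iff.2 hne))
      simp only [Set.mem_setOf_eq] at h2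
      simp only [Fin.coe_castSucc]
      omega
    · simp only [Fin.val_last]
      omega
  have hcomapAstar : ∀ i (w : V₁), Astar w ∈ S0 i → w ∈ S1 i := by
    intro i w hw
    rw [hS0] at hw
    rw [hS1, Basis.mem_span_image b]
    intro k hk
    rw [Finset.mem_coe, Finsupp.mem_support_iff] at hk
    simp only [Set.mem_setOf_eq]
    have hne : a.repr (Astar w) k.succ ≠ 0 := by rw [hreprAstar]; exact hk
    have h2 := (Basis.mem_span_image a).1 hw (Finset.mem_coe.2 (Finsupp.mem_support_iff.2 hne))
    simp only [Set.mem_setOf_eq, Fin.val_succ] at h2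
    omega
  -- uniqueness
  have huniq : ∀ FP, P FP → FP = (S0, S1) := by
    rintro ⟨F0, F1⟩ hFP
    obtain ⟨hm0, hm1, hr0', hr1', ht0', ht1', -, -, hA', hAs'⟩ := hFP
    have hr0 : ∀ i ≤ 2 * n + 1, finrank ℂ (F0 i) = i := hr0'
    have hr1 : ∀ i ≤ 2 * n, finrank ℂ (F1 i) = i := hr1'
    have ht0 : ∀ i, 2 * n + 1 ≤ i → F0 i = ⊤ := ht0'
    have ht1 : ∀ i, 2 * n ≤ i → F1 i = ⊤ := ht1'
    have hA : ∀ i, 1 ≤ i → i ≤ 2 * n + 1 → (F0 i).map A ≤ F1 (i - 1) := hA'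
    have hAs : ∀ j, (F1 j).map Astar ≤ F0 j := hAs'
    have key : ∀ i, F0 i = S0 i ∧ F1 i = S1 i := by
      intro i
      induction i with
      | zero =>
        have s0 : S0 0 = ⊥ := by
          rw [hS0]
          have he : {j : Fin (2 * n + 1) | 2 * n + 1 ≤ 0 + (j : ℕ)} = ∅ :=
            Set.eq_empty_iff_forall_notMem.2 fun j hj => by
              simp only [Set.mem_setOf_eq] at hj; have := j.isLt; omega
          rw [he, Set.image_empty, span_empty]
        have s1 : S1 0 = ⊥ := by
          rw [hS1]
          have he : {j : Fin (2 * n) | 2 * n ≤ 0 + (j : ℕ)} = ∅ :=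
            Set.eq_empty_iff_forall_notMem.2 fun j hj => by
              simp only [Set.mem_setOf_eq] at hj; have := j.isLt; omega
          rw [he, Set.image_empty, span_empty]
        constructor
        · rw [s0]; exact Submodule.finrank_eq_zero.1 (hr0 0 (by omega))
        · rw [s1]; exact Submodule.finrank_eq_zero.1 (hr1 0 (by omega))
      | succ i ih =>
        have e0 : F0 (i + 1) = S0 (i + 1) := by
          by_cases hle : i + 1 ≤ 2 * n + 1
          · have hsub : F0 (i + 1) ≤ S0 (i + 1) := by
              intro v hv
              have hmem : A v ∈ F1 i := by
                have := hA (i + 1) (by omega) hle (Submodule.mem_map_of_mem hv)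
                simpa using this
              rw [ih.2] at hmem
              exact hcomapA i v hmem
            exact Submodule.eq_of_le_of_finrank_le hsub
              (by rw [hrank0 (i + 1) hle, hr0 (i + 1) hle])
          · rw [ht0 (i + 1) (by omega), htop0 (i + 1) (by omega)]
        have e1 : F1 (i + 1) = S1 (i + 1) := by
          by_cases hle : i + 1 ≤ 2 * n
          · have hsub : F1 (i + 1) ≤ S1 (i + 1) := by
              intro w hw
              have hmem : Astar w ∈ F0 (i + 1) := hAs (i + 1) (Submodule.mem_map_of_mem hw)
              rw [e0] at hmem
              exact hcomapAstar (i + 1) w hmem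
            exact Submodule.eq_of_le_of_finrank_le hsub
              (by rw [hrank1 (i + 1) hle, hr1 (i + 1) hle])
          · rw [ht1 (i + 1) (by omega), htop1 (i + 1) (by omega)]
        exact ⟨e0, e1⟩
    have h1 : F0 = S0 := funext fun i => (key i).1
    have h2 : F1 = S1 := funext fun i => (key i).2
    rw [h1, h2]
  refine ⟨⟨(S0, S1), hP, fun FP h => huniq FP h⟩, ?_⟩
  intro FP h
  have hFP := huniq FP h
  rw [hFP]
  constructor
  · show S0 1 = _
    rw [hS0]
    have he : {j : Fin (2 * n + 1) | 2 * n + 1 ≤ 1 + (j : ℕ)} = {Fin.last (2 * n)} := by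
      ext j
      simp only [Set.mem_setOf_eq, Set.mem_singleton_iff, Fin.ext_iff, Fin.val_last]
      have := j.isLt; omega
    rw [he, Set.image_singleton]
  · show S1 1 = _
    rw [hS1]
    have he : {j : Fin (2 * n) | 2 * n ≤ 1 + (j : ℕ)} = {(⟨2 * n - 1, by omega⟩ : Fin (2 * n))} := by
      ext j
      simp only [Set.mem_setOf_eq, Set.mem_singleton_iff, Fin.ext_iff]
      have := j.isLt; omega
    rw [he, Set.image_singleton]
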